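/- arXiv:2412.19011 — 4 statements merged into one kernel-verified Lean document; each statement's English description precedes it below -/
import Mathlib

section
/- Let ι be a nonempty finite index set, let a : ι → ℝ with a_s > 0 for all s, let 0 ≤ ε < 1, and let h : ι → ℝ satisfy √(1 − ε²) ≤ h_s ≤ 1 for all s. Let M > 0, set A = Σ_s a_s, V = (1/3) Σ_s h_s · a_s, and suppose E = A²/M. Then 0 ≤ M·E/(3V) − 3V ≤ (1 + A/(3V)) · A · (1 − √(1 − ε²)). -/
/-- Theorem 3.1, estimate (4.4): with `a_s > 0`, `0 ≤ ε < 1`, `√(1 − ε²) ≤ h_s ≤ 1`,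
`M > 0`, `A = Σ a_s`, `V = (1/3) Σ h_s a_s`, and `E = A²/M` (area-preserving case), one has
`0 ≤ M·E/(3V) − 3V ≤ (1 + A/(3V)) · A · (1 − √(1 − ε²))`. -/
theorem spherical_authalic_bound_of_area_preserving {ι : Type*} [Fintype ι] [Nonempty ι]
    (a h : ι → ℝ) (ε M E A V : ℝ)
    (ha : ∀ s, 0 < a s) (hε0 : 0 ≤ ε) (hε1 : ε < 1)
    (hh1 : ∀ s, Real.sqrt (1 - ε ^ 2) ≤ h s) (hh2 : ∀ s, h s ≤ 1)
    (hM : 0 < M)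
    (hA : A = ∑ s, a s) (hV : V = (1 / 3) * ∑ s, h s * a s)
    (hE : E = A ^ 2 / M) :
    0 ≤ M * E / (3 * V) - 3 * V ∧
      M * E / (3 * V) - 3 * V
        ≤ (1 + A / (3 * V)) * A * (1 - Real.sqrt (1 - ε ^ 2)) := by
  set c := Real.sqrt (1 - ε ^ 2) with hc
  have hε2 : 0 < 1 - ε ^ 2 := by nlinarith
  have hc0 : 0 < c := Real.sqrt_pos.mpr hε2
  have hc1 : c ≤ 1 := by
    exact Real.sqrt_le_one.mpr (by nlinarith)
  set S := ∑ s, h s * a s with hS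
  have hSpos : 0 < S := by
    refine Finset.sum_pos (fun s _ => ?_) Finset.univ_nonempty
    exact mul_pos (lt_of_lt_of_le hc0 (hh1 s)) (ha s)
  have hApos : 0 < A := by
    rw [hA]; exact Finset.sum_pos (fun s _ => ha s) Finset.univ_nonempty
  have hSA : S ≤ A := by
    rw [hA, hS]
    exact Finset.sum_le_sum fun s _ =>
      (mul_le_of_le_one_left (ha s).le (hh2 s))
  have hAS : A - S ≤ (1 - c) * A := by
    have : A - S = ∑ s, (1 - h s) * a s := by
      rw [hA, hS, ← Finset.sum_sub_distrib]
      exact Finset.sum_congr rfl fun s _ => by ring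
    rw [this, hA, Finset.mul_sum]
    exact Finset.sum_le_sum fun s _ =>
      mul_le_mul_of_nonneg_right (by linarith [hh1 s]) (ha s).le
  have h3V : 3 * V = S := by rw [hV]; ring
  have hME : M * E / (3 * V) = A ^ 2 / S := by
    rw [h3V, hE]; field_simp
  rw [hME, h3V]
  constructor
  · have : S ^ 2 ≤ A ^ 2 := by nlinarith
    rw [sub_nonneg]
    exact (le_div_iff₀ hSpos).mpr (by nlinarith)
  · rw [div_sub' hSpos.ne', div_le_iff₀ hSpos]
    have key : (A - S) * (A + S) ≤ ((1 - c) * A) * (A + S) :=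
      mul_le_mul_of_nonneg_right hAS (by nlinarith)
    have expand : (1 + A / S) * A * (1 - c) * S = ((1 - c) * A) * (A + S) := by
      field_simp; ring
    nlinarith [key]
end

section
/- Let ι be a nonempty finite index set and 0 ≤ ε < 1. For each s ∈ ι, let u_s, v_s, w_s ∈ ℝ³ be affinely independent unit vectors with u_s · (v_s × w_s) > 0, and suppose the distance from each of u_s, v_s, w_s to the orthogonal projection of the origin onto the affine span of {u_s, v_s, w_s} is at most ε. Let m : ι → ℝ with m_s > 0. Define the image areas a_s = ‖(v_s − u_s) × (w_s − u_s)‖/2, the total image area A = Σ_s a_s, the volume V = Σ_s u_s · (v_s × w_s)/6, the surface area M = Σ_s m_s, and the stretch energy E = Σ_s a_s²/m_s. Then (M·E/(3V) − 3V) − (M·E/A − A) is nonnegative and at most (1 + E·M/(3V·A)) · A · (1 − √(1 − ε²)). -/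
open scoped RealInnerProductSpace

/-- The cross product on `ℝ³` (Euclidean space). -/
noncomputable def cross3 (x y : EuclideanSpace ℝ (Fin 3)) : EuclideanSpace ℝ (Fin 3) :=
  WithLp.toLp 2 (crossProduct x y)

lemma inner3 (x y : EuclideanSpace ℝ (Fin 3)) : ⟪x, y⟫ = x 0 * y 0 + x 1 * y 1 + x 2 * y 2 := by
  simp [PiLp.inner_apply, Fin.sum_univ_three, RCLike.inner_apply, mul_comm]
lemma c30 (x y : EuclideanSpace ℝ (Fin 3)) : (cross3 x y) 0 = x 1 * y 2 - x 2 * y 1 := rfl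
lemma c31 (x y : EuclideanSpace ℝ (Fin 3)) : (cross3 x y) 1 = x 2 * y 0 - x 0 * y 2 := rfl
lemma c32 (x y : EuclideanSpace ℝ (Fin 3)) : (cross3 x y) 2 = x 0 * y 1 - x 1 * y 0 := rfl
lemma sub3 (x y : EuclideanSpace ℝ (Fin 3)) (i : Fin 3) : (x - y) i = x i - y i := rfl
lemma norm3sq (x : EuclideanSpace ℝ (Fin 3)) : ‖x‖^2 = x 0 ^2 + x 1^2 + x 2^2 := by
  simp [EuclideanSpace.norm_eq, Fin.sum_univ_three]
  rw [Real.sq_sqrt]; positivity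
lemma scalar1 (p0 p1 p2 n0 n1 n2 q0 q1 q2 : ℝ)
    (hc0 : p1*n2 - p2*n1 = 0) (hc1 : p2*n0 - p0*n2 = 0) (hc2 : p0*n1 - p1*n0 = 0)
    (hC : q0*p0 + q1*p1 + q2*p2 = 0) :
    (q0*n0 + q1*n1 + q2*n2) * (p0^2 + p1^2 + p2^2) = 0 := by
  linear_combination (n0*p0+n1*p1+n2*p2) * hC + (-q0*p1 + q1*p0) * hc2
    + (q0*p2 - q2*p0) * hc1 + (-q1*p2 + q2*p1) * hc0
lemma scalar2 (p0 p1 p2 n0 n1 n2 : ℝ)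
    (hc0 : p1*n2 - p2*n1 = 0) (hc1 : p2*n0 - p0*n2 = 0) (hc2 : p0*n1 - p1*n0 = 0) :
    (p0*n0 + p1*n1 + p2*n2)^2 = (p0^2 + p1^2 + p2^2) * (n0^2 + n1^2 + n2^2) := by
  linear_combination (-(p1*n2 - p2*n1))*hc0 + (-(p2*n0 - p0*n2))*hc1 + (-(p0*n1 - p1*n0))*hc2

lemma scalar_main1 (u0 u1 u2 v0 v1 v2 w0 w1 w2 p0 p1 p2 : ℝ)
    (hA : p0*(v0-u0) + p1*(v1-u1) + p2*(v2-u2) = 0)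
    (hB : p0*(w0-u0) + p1*(w1-u1) + p2*(w2-u2) = 0)
    (hC : p0*(u0-p0) + p1*(u1-p1) + p2*(u2-p2) = 0)
    (hP : 0 < p0^2 + p1^2 + p2^2) :
    u0*(v1*w2-v2*w1) + u1*(v2*w0-v0*w2) + u2*(v0*w1-v1*w0)
      = p0*((v1-u1)*(w2-u2)-(v2-u2)*(w1-u1)) + p1*((v2-u2)*(w0-u0)-(v0-u0)*(w2-u2)) + p2*((v0-u0)*(w1-u1)-(v1-u1)*(w0-u0)) := by
  have hc0 : p1*((v0-u0)*(w1-u1)-(v1-u1)*(w0-u0)) - p2*((v2-u2)*(w0-u0)-(v0-u0)*(w2-u2)) = 0 := by linear_combination (v0-u0)*hB - (w0-u0)*hA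
  have hc1 : p2*((v1-u1)*(w2-u2)-(v2-u2)*(w1-u1)) - p0*((v0-u0)*(w1-u1)-(v1-u1)*(w0-u0)) = 0 := by linear_combination (v1-u1)*hB - (w1-u1)*hA
  have hc2 : p0*((v2-u2)*(w0-u0)-(v0-u0)*(w2-u2)) - p1*((v1-u1)*(w2-u2)-(v2-u2)*(w1-u1)) = 0 := by linear_combination (v2-u2)*hB - (w2-u2)*hA
  have hq := scalar1 p0 p1 p2 ((v1-u1)*(w2-u2)-(v2-u2)*(w1-u1)) ((v2-u2)*(w0-u0)-(v0-u0)*(w2-u2)) ((v0-u0)*(w1-u1)-(v1-u1)*(w0-u0)) (u0-p0) (u1-p1) (u2-p2) hc0 hc1 hc2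
    (by linear_combination hC)
  have hqn : (u0-p0)*((v1-u1)*(w2-u2)-(v2-u2)*(w1-u1)) + (u1-p1)*((v2-u2)*(w0-u0)-(v0-u0)*(w2-u2)) + (u2-p2)*((v0-u0)*(w1-u1)-(v1-u1)*(w0-u0)) = 0 := by
    rcases mul_eq_zero.mp hq with h | h
    · exact h
    · exact absurd h (by linarith)
  linear_combination hqn

lemma scalar_main2 (u0 u1 u2 v0 v1 v2 w0 w1 w2 p0 p1 p2 : ℝ)
    (hA : p0*(v0-u0) + p1*(v1-u1) + p2*(v2-u2) = 0)
    (hB : p0*(w0-u0) + p1*(w1-u1) + p2*(w2-u2) = 0) :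
    (p0*((v1-u1)*(w2-u2)-(v2-u2)*(w1-u1)) + p1*((v2-u2)*(w0-u0)-(v0-u0)*(w2-u2)) + p2*((v0-u0)*(w1-u1)-(v1-u1)*(w0-u0)))^2
      = (p0^2 + p1^2 + p2^2) * (((v1-u1)*(w2-u2)-(v2-u2)*(w1-u1))^2 + ((v2-u2)*(w0-u0)-(v0-u0)*(w2-u2))^2 + ((v0-u0)*(w1-u1)-(v1-u1)*(w0-u0))^2) := by
  have hc0 : p1*((v0-u0)*(w1-u1)-(v1-u1)*(w0-u0)) - p2*((v2-u2)*(w0-u0)-(v0-u0)*(w2-u2)) = 0 := by linear_combination (v0-u0)*hB - (w0-u0)*hA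
  have hc1 : p2*((v1-u1)*(w2-u2)-(v2-u2)*(w1-u1)) - p0*((v0-u0)*(w1-u1)-(v1-u1)*(w0-u0)) = 0 := by linear_combination (v1-u1)*hB - (w1-u1)*hA
  have hc2 : p0*((v2-u2)*(w0-u0)-(v0-u0)*(w2-u2)) - p1*((v1-u1)*(w2-u2)-(v2-u2)*(w1-u1)) = 0 := by linear_combination (v2-u2)*hB - (w2-u2)*hA
  exact scalar2 _ _ _ _ _ _ hc0 hc1 hc2

lemma key (ε : ℝ) (hε0 : 0 ≤ ε) (hε1 : ε < 1) (u v w P : EuclideanSpace ℝ (Fin 3))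
    (hu : ‖u‖ = 1)
    (h0 : 0 < ⟪u, cross3 v w⟫)
    (hpu : ⟪P, u - P⟫ = 0) (hpv : ⟪P, v - P⟫ = 0) (hpw : ⟪P, w - P⟫ = 0)
    (hru : dist u P ≤ ε) :
    ⟪u, cross3 v w⟫ = ‖P‖ * ‖cross3 (v - u) (w - u)‖ ∧
      Real.sqrt (1 - ε^2) ≤ ‖P‖ ∧ ‖P‖ ≤ 1 := by
  have hdecomp : (1:ℝ) = ‖P‖^2 + ‖u - P‖^2 := by
    have h := norm_add_sq_real P (u - P)
    have h2 : P + (u - P) = u := by abel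
    rw [h2, hu, hpu] at h
    linarith
  have hd2 : ‖u - P‖^2 ≤ ε^2 := by
    rw [← dist_eq_norm u P]; exact pow_le_pow_left₀ dist_nonneg hru 2
  have hP2 : 1 - ε^2 ≤ ‖P‖^2 := by linarith
  have hP2pos : 0 < ‖P‖^2 := by nlinarith
  have hPle1 : ‖P‖ ≤ 1 := by nlinarith [norm_nonneg P]
  have hPge : Real.sqrt (1 - ε^2) ≤ ‖P‖ := by
    rw [show ‖P‖ = Real.sqrt (‖P‖^2) by rw [Real.sqrt_sq (norm_nonneg P)]]
    exact Real.sqrt_le_sqrt hP2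
  refine ⟨?_, hPge, hPle1⟩
  have hA : ⟪P, v - u⟫ = 0 := by
    have h3 : (v : EuclideanSpace ℝ (Fin 3)) - u = (v - P) - (u - P) := by abel
    rw [h3, inner_sub_right, hpu, hpv]; ring
  have hB : ⟪P, w - u⟫ = 0 := by
    have h3 : (w : EuclideanSpace ℝ (Fin 3)) - u = (w - P) - (u - P) := by abel
    rw [h3, inner_sub_right, hpu, hpw]; ring
  rw [inner3] at hA hB hpu
  simp only [sub3] at hA hB hpu
  have hPP : ‖P‖^2 = P 0^2 + P 1^2 + P 2^2 := norm3sq P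
  have hPpos' : 0 < P 0^2 + P 1^2 + P 2^2 := by rw [← hPP]; exact hP2pos
  have hm1 := scalar_main1 (u 0) (u 1) (u 2) (v 0) (v 1) (v 2) (w 0) (w 1) (w 2)
    (P 0) (P 1) (P 2) hA hB hpu hPpos'
  have hm2 := scalar_main2 (u 0) (u 1) (u 2) (v 0) (v 1) (v 2) (w 0) (w 1) (w 2)
    (P 0) (P 1) (P 2) hA hB
  have hiw : ⟪u, cross3 v w⟫
      = u 0 * (v 1 * w 2 - v 2 * w 1) + u 1 * (v 2 * w 0 - v 0 * w 2)
        + u 2 * (v 0 * w 1 - v 1 * w 0) := by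
    rw [inner3, c30, c31, c32]
  have hnormn : ‖cross3 (v - u) (w - u)‖^2 = ((v 1 - u 1)*(w 2 - u 2)-(v 2 - u 2)*(w 1 - u 1))^2 + ((v 2 - u 2)*(w 0 - u 0)-(v 0 - u 0)*(w 2 - u 2))^2 + ((v 0 - u 0)*(w 1 - u 1)-(v 1 - u 1)*(w 0 - u 0))^2 := by
    rw [norm3sq]; rfl
  set X : ℝ := P 0 * ((v 1 - u 1)*(w 2 - u 2)-(v 2 - u 2)*(w 1 - u 1)) + P 1 * ((v 2 - u 2)*(w 0 - u 0)-(v 0 - u 0)*(w 2 - u 2)) + P 2 * ((v 0 - u 0)*(w 1 - u 1)-(v 1 - u 1)*(w 0 - u 0)) with hX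
  have hXpos : 0 < X := by rw [← hm1, ← hiw]; exact h0
  have hXsq : X^2 = (‖P‖ * ‖cross3 (v - u) (w - u)‖)^2 := by
    rw [hX, hm2, ← hPP, ← hnormn]; ring
  have hfin : X = ‖P‖ * ‖cross3 (v - u) (w - u)‖ := by
    have := Real.sqrt_sq hXpos.le
    rw [← this, hXsq, Real.sqrt_sq (by positivity)]
  rw [hiw, hm1]; exact hfin

/-- Theorem 3.1 of the paper stated concretely in `ℝ³`: for positively oriented triangles
`[u_s, v_s, w_s]` with unit-vector vertices and circumradius at most `ε < 1` (the circumcenter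
`P_s` being the orthogonal projection of the origin onto the affine span of the vertices),
domain face areas `m_s > 0`, image areas `a_s = ‖(v_s − u_s) × (w_s − u_s)‖/2`, total image
area `A`, volume measurement `V`, surface area `M`, and stretch energy `E`, the difference
`E_𝔸 − E_A = (M·E/(3V) − 3V) − (M·E/A − A)` is nonnegative and at most
`(1 + E·M/(3V·A)) · A · (1 − √(1 − ε²))`. -/
theorem spherical_authalic_energy_estimate {ι : Type*} [Fintype ι] [Nonempty ι]
    (ε : ℝ) (hε0 : 0 ≤ ε) (hε1 : ε < 1)
    (u v w P : ι → EuclideanSpace ℝ (Fin 3))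
    (hind : ∀ s, AffineIndependent ℝ ![u s, v s, w s])
    (hu : ∀ s, ‖u s‖ = 1) (hv : ∀ s, ‖v s‖ = 1) (hw : ∀ s, ‖w s‖ = 1)
    (horient : ∀ s, 0 < ⟪u s, cross3 (v s) (w s)⟫)
    (hPmem : ∀ s, P s ∈ affineSpan ℝ {u s, v s, w s})
    (hPorth : ∀ s, ∀ q ∈ affineSpan ℝ {u s, v s, w s},
      ⟪(0 : EuclideanSpace ℝ (Fin 3)) - P s, q - P s⟫ = 0)
    (hPu : ∀ s, dist (u s) (P s) ≤ ε) (hPv : ∀ s, dist (v s) (P s) ≤ ε)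
    (hPw : ∀ s, dist (w s) (P s) ≤ ε)
    (m : ι → ℝ) (hm : ∀ s, 0 < m s)
    (a : ι → ℝ) (A V M E : ℝ)
    (ha : ∀ s, a s = ‖cross3 (v s - u s) (w s - u s)‖ / 2)
    (hA : A = ∑ s, a s)
    (hV : V = ∑ s, ⟪u s, cross3 (v s) (w s)⟫ / 6)
    (hM : M = ∑ s, m s)
    (hE : E = ∑ s, a s ^ 2 / m s) :
    0 ≤ (M * E / (3 * V) - 3 * V) - (M * E / A - A) ∧
      (M * E / (3 * V) - 3 * V) - (M * E / A - A)
        ≤ (1 + E * M / (3 * V * A)) * A * (1 - Real.sqrt (1 - ε ^ 2)) := by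
  have hkey : ∀ s, ⟪u s, cross3 (v s) (w s)⟫ = ‖P s‖ * ‖cross3 (v s - u s) (w s - u s)‖ ∧
      Real.sqrt (1 - ε^2) ≤ ‖P s‖ ∧ ‖P s‖ ≤ 1 := by
    intro s
    have horthP : ∀ q ∈ affineSpan ℝ {u s, v s, w s}, ⟪P s, q - P s⟫ = 0 := by
      intro q hq
      have h := hPorth s q hq
      rwa [zero_sub, inner_neg_left, neg_eq_zero] at h
    have hmu : u s ∈ affineSpan ℝ {u s, v s, w s} := subset_affineSpan ℝ _ (by simp)
    have hmv : v s ∈ affineSpan ℝ {u s, v s, w s} := subset_affineSpan ℝ _ (by simp)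
    have hmw : w s ∈ affineSpan ℝ {u s, v s, w s} := subset_affineSpan ℝ _ (by simp)
    exact key ε hε0 hε1 (u s) (v s) (w s) (P s) (hu s) (horient s)
      (horthP _ hmu) (horthP _ hmv) (horthP _ hmw) (hPu s)
  set t : ℝ := Real.sqrt (1 - ε^2) with htdef
  have ht0 : 0 < t := Real.sqrt_pos.mpr (by nlinarith)
  have ht1 : t ≤ 1 := Real.sqrt_le_one.mpr (by nlinarith)
  have hapos : ∀ s, 0 < a s := by
    intro s
    have h1 := (hkey s).1
    have h2 := horient s
    rw [h1] at h2
    have hn : 0 < ‖cross3 (v s - u s) (w s - u s)‖ := by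
      by_contra hc
      push_neg at hc
      have : ‖cross3 (v s - u s) (w s - u s)‖ = 0 := le_antisymm hc (norm_nonneg _)
      rw [this, mul_zero] at h2; exact lt_irrefl _ h2
    rw [ha s]; linarith [hn]
  have hVs : ∀ s, ⟪u s, cross3 (v s) (w s)⟫ / 6 = (‖P s‖ * a s) / 3 := by
    intro s
    rw [(hkey s).1, ha s]; ring
  have h3V : 3 * V = ∑ s, ‖P s‖ * a s := by
    rw [hV, Finset.sum_congr rfl fun s _ => hVs s, ← Finset.sum_div]
    ring
  have hApos : 0 < A := by
    rw [hA]; exact Finset.sum_pos (fun s _ => hapos s) Finset.univ_nonempty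
  have hlow : t * A ≤ 3 * V := by
    rw [h3V, hA, Finset.mul_sum]
    exact Finset.sum_le_sum fun s _ => mul_le_mul_of_nonneg_right (hkey s).2.1 (hapos s).le
  have hhigh : 3 * V ≤ A := by
    rw [h3V, hA]
    exact Finset.sum_le_sum fun s _ => by
      nlinarith [(hkey s).2.2, (hapos s), norm_nonneg (P s)]
  have h3Vpos : 0 < 3 * V := lt_of_lt_of_le (by positivity) hlow
  have hMpos : 0 < M := by
    rw [hM]; exact Finset.sum_pos (fun s _ => hm s) Finset.univ_nonempty
  have hEnn : 0 ≤ E := by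
    rw [hE]; exact Finset.sum_nonneg fun s _ => div_nonneg (sq_nonneg _) (hm s).le
  set k : ℝ := M * E / (3 * V * A) with hkdef
  have hknn : 0 ≤ k := by positivity
  have hk1 : M * E / (3 * V) = k * A := by
    rw [hkdef]; field_simp
  have hk2 : M * E / A = k * (3 * V) := by
    rw [hkdef]; field_simp; rw [mul_div_assoc, div_self (by linarith : V ≠ 0), mul_one]
  have hfact : (M * E / (3 * V) - 3 * V) - (M * E / A - A) = (1 + k) * (A - 3 * V) := by
    rw [hk1, hk2]; ring
  have hkk : E * M / (3 * V * A) = k := by rw [hkdef]; ring_nf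
  constructor
  · rw [hfact]
    exact mul_nonneg (by linarith) (by linarith)
  · rw [hfact, hkk]
    have h1 : A - 3 * V ≤ A * (1 - t) := by nlinarith
    calc (1 + k) * (A - 3 * V) ≤ (1 + k) * (A * (1 - t)) :=
          mul_le_mul_of_nonneg_left h1 (by linarith)
      _ = (1 + k) * A * (1 - t) := by ring
end

section
/- Let ι be a nonempty finite index set and 0 ≤ ε < 1. For each s ∈ ι, let u_s, v_s, w_s ∈ ℝ³ be affinely independent unit vectors with u_s · (v_s × w_s) > 0, and suppose the distance from each of u_s, v_s, w_s to the orthogonal projection of the origin onto the affine span of {u_s, v_s, w_s} is at most ε. Let m : ι → ℝ with m_s > 0, and suppose there is a constant c > 0 with ‖(v_s − u_s) × (w_s − u_s)‖/2 = c · m_s for all s (the map is area-preserving). Define a_s = ‖(v_s − u_s) × (w_s − u_s)‖/2, A = Σ_s a_s, V = Σ_s u_s · (v_s × w_s)/6, M = Σ_s m_s, and E = Σ_s a_s²/m_s. Then 0 ≤ M·E/(3V) − 3V ≤ (1 + A/(3V)) · A · (1 − √(1 − ε²)). -/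
open scoped RealInnerProductSpace

private lemma triple3 (x y z : EuclideanSpace ℝ (Fin 3)) :
    cross3 x (cross3 y z) = ⟪x, z⟫ • y - ⟪x, y⟫ • z := by
  ext i
  fin_cases i <;>
    simp [cross3, cross_apply, PiLp.inner_apply, Fin.sum_univ_three, RCLike.inner_apply] <;>
    ring

private lemma lagrange3 (x y : EuclideanSpace ℝ (Fin 3)) :
    ‖cross3 x y‖ ^ 2 = ‖x‖ ^ 2 * ‖y‖ ^ 2 - ⟪x, y⟫ ^ 2 := by
  rw [← real_inner_self_eq_norm_sq, ← real_inner_self_eq_norm_sq, ← real_inner_self_eq_norm_sq]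
  simp [cross3, cross_apply, PiLp.inner_apply, Fin.sum_univ_three, RCLike.inner_apply,
    EuclideanSpace.norm_sq_eq, Real.norm_eq_abs, sq_abs]
  ring

private lemma stepA3 (u v w : EuclideanSpace ℝ (Fin 3)) :
    ⟪u, cross3 v w⟫ = ⟪u, cross3 (v - u) (w - u)⟫ := by
  simp [cross3, cross_apply, PiLp.inner_apply, Fin.sum_univ_three, RCLike.inner_apply]
  ring

private lemma face3 {ε : ℝ} (hε0 : 0 ≤ ε) (hε1 : ε < 1) (u v w P : EuclideanSpace ℝ (Fin 3))
    (hu : ‖u‖ = 1) (hor : 0 < ⟪u, cross3 v w⟫)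
    (hb : ⟪P, v - u⟫ = 0) (hcc : ⟪P, w - u⟫ = 0) (hup : ⟪P, u - P⟫ = 0)
    (hd : dist u P ≤ ε) :
    ⟪u, cross3 v w⟫ = ‖P‖ * ‖cross3 (v - u) (w - u)‖ ∧
      Real.sqrt (1 - ε ^ 2) ≤ ‖P‖ ∧ ‖P‖ ≤ 1 := by
  set n := cross3 (v - u) (w - u) with hn
  have hPu' : ⟪P, u⟫ = ‖P‖ ^ 2 := by
    have := hup
    rw [inner_sub_right, real_inner_self_eq_norm_sq, sub_eq_zero] at this
    exact this
  have hdist : dist u P ^ 2 = 1 - ‖P‖ ^ 2 := by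
    rw [dist_eq_norm, norm_sub_sq_real, hu, real_inner_comm, hPu']
    ring
  have hdn : 0 ≤ dist u P := dist_nonneg
  have h1 : 1 - ε ^ 2 ≤ ‖P‖ ^ 2 := by nlinarith
  have h2 : ‖P‖ ^ 2 ≤ 1 := by nlinarith
  have hPn : 0 ≤ ‖P‖ := norm_nonneg P
  refine ⟨?_, ?_, by nlinarith⟩
  · have htr : cross3 P n = 0 := by
      rw [hn, triple3, hb, hcc]; simp
    have hlag : ⟪P, n⟫ ^ 2 = ‖P‖ ^ 2 * ‖n‖ ^ 2 := by
      have hl := lagrange3 P n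
      rw [htr, norm_zero, zero_pow (two_ne_zero)] at hl
      linarith
    have htr2 : ⟪P, P⟫ • n = ⟪P, n⟫ • P := by
      have h := triple3 P P n
      rw [htr] at h
      have h0 : cross3 P (0 : EuclideanSpace ℝ (Fin 3)) = 0 := by
        simp [cross3]
      rw [h0] at h
      exact (sub_eq_zero.1 h.symm).symm
    have hun : ⟪u, n⟫ = ⟪P, n⟫ := by
      have h := congrArg (fun z => ⟪u - P, z⟫) htr2
      simp only [real_inner_smul_right] at h
      have h1' : ⟪u - P, P⟫ = 0 := by
        rw [real_inner_comm]; exact hup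
      have hPP : ⟪P, P⟫ = ‖P‖ ^ 2 := real_inner_self_eq_norm_sq P
      rw [h1', hPP, mul_zero] at h
      have hP2 : (0:ℝ) < ‖P‖ ^ 2 := by nlinarith
      have h3 : ⟪u - P, n⟫ = 0 := by
        rcases mul_eq_zero.1 h with h' | h'
        · exact absurd h' hP2.ne'
        · exact h'
      rw [inner_sub_left, sub_eq_zero] at h3
      exact h3
    have hupos : ⟪u, n⟫ = ⟪u, cross3 v w⟫ := (stepA3 u v w).symm
    have hnn : 0 ≤ ‖n‖ := norm_nonneg n
    have hpos : 0 < ⟪P, n⟫ := by rw [← hun, hupos]; exact hor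
    have : ⟪P, n⟫ = ‖P‖ * ‖n‖ := by
      have hmn : 0 ≤ ‖P‖ * ‖n‖ := mul_nonneg hPn hnn
      refine le_antisymm ?_ ?_ <;> nlinarith [hlag, hpos, hmn]
    rw [← hupos, hun, this]
  · have := Real.sqrt_le_sqrt h1
    rwa [Real.sqrt_sq hPn] at this

/-- The second assertion of Theorem 3.1 stated concretely in `ℝ³`: for positively oriented
triangles `[u_s, v_s, w_s]` with unit-vector vertices and circumradius at most `ε < 1`,
domain face areas `m_s > 0`, and an area-preserving map (`a_s = c·m_s` for a constant `c > 0`,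
where `a_s = ‖(v_s − u_s) × (w_s − u_s)‖/2`), the spherical authalic energy
`M·E/(3V) − 3V` satisfies `0 ≤ M·E/(3V) − 3V ≤ (1 + A/(3V)) · A · (1 − √(1 − ε²))`. -/
theorem spherical_authalic_energy_bound_area_preserving {ι : Type*} [Fintype ι] [Nonempty ι]
    (ε : ℝ) (hε0 : 0 ≤ ε) (hε1 : ε < 1)
    (u v w P : ι → EuclideanSpace ℝ (Fin 3))
    (hind : ∀ s, AffineIndependent ℝ ![u s, v s, w s])
    (hu : ∀ s, ‖u s‖ = 1) (hv : ∀ s, ‖v s‖ = 1) (hw : ∀ s, ‖w s‖ = 1)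
    (horient : ∀ s, 0 < ⟪u s, cross3 (v s) (w s)⟫)
    (hPmem : ∀ s, P s ∈ affineSpan ℝ {u s, v s, w s})
    (hPorth : ∀ s, ∀ q ∈ affineSpan ℝ {u s, v s, w s},
      ⟪(0 : EuclideanSpace ℝ (Fin 3)) - P s, q - P s⟫ = 0)
    (hPu : ∀ s, dist (u s) (P s) ≤ ε) (hPv : ∀ s, dist (v s) (P s) ≤ ε)
    (hPw : ∀ s, dist (w s) (P s) ≤ ε)
    (m : ι → ℝ) (hm : ∀ s, 0 < m s)
    (c : ℝ) (hc : 0 < c)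
    (hareap : ∀ s, ‖cross3 (v s - u s) (w s - u s)‖ / 2 = c * m s)
    (a : ι → ℝ) (A V M E : ℝ)
    (ha : ∀ s, a s = ‖cross3 (v s - u s) (w s - u s)‖ / 2)
    (hA : A = ∑ s, a s)
    (hV : V = ∑ s, ⟪u s, cross3 (v s) (w s)⟫ / 6)
    (hM : M = ∑ s, m s)
    (hE : E = ∑ s, a s ^ 2 / m s) :
    0 ≤ M * E / (3 * V) - 3 * V ∧
      M * E / (3 * V) - 3 * V
        ≤ (1 + A / (3 * V)) * A * (1 - Real.sqrt (1 - ε ^ 2)) := by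
  have horth : ∀ s, ⟪P s, v s - u s⟫ = 0 ∧ ⟪P s, w s - u s⟫ = 0 ∧ ⟪P s, u s - P s⟫ = 0 := by
    intro s
    have hmu : u s ∈ affineSpan ℝ {u s, v s, w s} := subset_affineSpan ℝ _ (by simp)
    have hmv : v s ∈ affineSpan ℝ {u s, v s, w s} := subset_affineSpan ℝ _ (by simp)
    have hmw : w s ∈ affineSpan ℝ {u s, v s, w s} := subset_affineSpan ℝ _ (by simp)
    have h1 := hPorth s (u s) hmu
    have h2 := hPorth s (v s) hmv
    have h3 := hPorth s (w s) hmw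
    rw [zero_sub, inner_neg_left, neg_eq_zero] at h1 h2 h3
    refine ⟨?_, ?_, h1⟩
    · have he : ⟪P s, v s - u s⟫ = ⟪P s, v s - P s⟫ - ⟪P s, u s - P s⟫ := by
        rw [← inner_sub_right]; congr 1; abel
      rw [he, h1, h2, sub_zero]
    · have he : ⟪P s, w s - u s⟫ = ⟪P s, w s - P s⟫ - ⟪P s, u s - P s⟫ := by
        rw [← inner_sub_right]; congr 1; abel
      rw [he, h1, h3, sub_zero]
  have key : ∀ s, ⟪u s, cross3 (v s) (w s)⟫ = ‖P s‖ * ‖cross3 (v s - u s) (w s - u s)‖ ∧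
      Real.sqrt (1 - ε ^ 2) ≤ ‖P s‖ ∧ ‖P s‖ ≤ 1 := fun s =>
    face3 hε0 hε1 (u s) (v s) (w s) (P s) (hu s) (horient s)
      (horth s).1 (horth s).2.1 (horth s).2.2 (hPu s)
  have hapos : ∀ s, 0 < a s := fun s => by
    rw [ha s, hareap s]; exact mul_pos hc (hm s)
  have h3V : 3 * V = ∑ s, ‖P s‖ * a s := by
    rw [hV, Finset.mul_sum]
    refine Finset.sum_congr rfl fun s _ => ?_
    rw [(key s).1, ha s]; ring
  have hk1 : Real.sqrt (1 - ε ^ 2) ≤ 1 := Real.sqrt_le_one.2 (by nlinarith)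
  have hkpos : 0 < Real.sqrt (1 - ε ^ 2) := Real.sqrt_pos.2 (by nlinarith)
  have hApos : 0 < A := by
    rw [hA]; exact Finset.sum_pos (fun s _ => hapos s) Finset.univ_nonempty
  have hlow : Real.sqrt (1 - ε ^ 2) * A ≤ 3 * V := by
    rw [h3V, hA, Finset.mul_sum]
    exact Finset.sum_le_sum fun s _ =>
      mul_le_mul_of_nonneg_right (key s).2.1 (hapos s).le
  have hhigh : 3 * V ≤ A := by
    rw [h3V, hA]
    refine Finset.sum_le_sum fun s _ => ?_
    nlinarith [(key s).2.2, hapos s]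
  have hT : 0 < 3 * V := lt_of_lt_of_le (mul_pos hkpos hApos) hlow
  have hME : M * E = A ^ 2 := by
    have hAc : A = c * M := by
      rw [hA, hM, Finset.mul_sum]
      exact Finset.sum_congr rfl fun s _ => by rw [ha s, hareap s]
    have hEc : E = c ^ 2 * M := by
      rw [hE, hM, Finset.mul_sum]
      refine Finset.sum_congr rfl fun s _ => ?_
      rw [ha s, hareap s, mul_pow]
      field_simp [(hm s).ne']
    rw [hAc, hEc]; ring
  rw [hME]
  set k := Real.sqrt (1 - ε ^ 2) with hkdef
  set T := 3 * V with hTdef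
  constructor
  · have h1 : T ≤ A ^ 2 / T := by
      rw [le_div_iff₀ hT]; nlinarith
    linarith
  · have hrT : A / T * T = A := div_mul_cancel₀ A hT.ne'
    have hA2 : A ^ 2 / T = A * (A / T) := by rw [pow_two, mul_div_assoc]
    rw [hA2]
    set r := A / T with hr
    have hArT : A * r * T = A ^ 2 := by rw [mul_assoc, hrT, sq]
    have hkArT : k * (A * r * T) = k * A ^ 2 := by rw [hArT]
    nlinarith [hArT, hkArT, hT, hhigh, hApos, hk1,
      mul_nonneg (sub_nonneg.2 hlow) (by linarith : (0:ℝ) ≤ A + T)]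
end

section
/- Let E : ℝᵐ → ℝ be continuously differentiable and bounded below, with gradient g = ∇E Lipschitz continuous on ℝᵐ. Let M be an m×m real symmetric positive definite matrix and 0 < c₁ < c₂ < 1/2. Let (x_k)_{k≥0} be generated by x_{k+1} = x_k + α_k p_k, where p_0 = −M⁻¹ g(x_0), and for k ≥ 1, p_k = −M⁻¹ g(x_k) + β_k p_{k−1} with β_k = (g(x_k)ᵀ M⁻¹ g(x_k)) / (g(x_{k−1})ᵀ M⁻¹ g(x_{k−1})), assuming g(x_k) ≠ 0 for all k, and where each step length α_k > 0 satisfies the strong Wolfe conditions: E(x_k + α_k p_k) − E(x_k) ≤ c₁ α_k g(x_k)ᵀ p_k and |g(x_k + α_k p_k)ᵀ p_k| ≤ c₂ |g(x_k)ᵀ p_k|. Then lim inf_{k→∞} ‖g(x_k)‖ = 0. -/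
set_option maxHeartbeats 4000000

open scoped RealInnerProductSpace

lemma posdef_toEuclideanLin_pos {m : ℕ} {P : Matrix (Fin m) (Fin m) ℝ} (hP : P.PosDef)
    {v : EuclideanSpace ℝ (Fin m)} (hv : v ≠ 0) :
    0 < ⟪v, Matrix.toEuclideanLin P v⟫ := by
  have h1 : ⟪v, Matrix.toEuclideanLin P v⟫
      = dotProduct (star (WithLp.ofLp v))
        (WithLp.ofLp (Matrix.toEuclideanLin P v)) := by
    rw [EuclideanSpace.inner_eq_star_dotProduct, dotProduct_comm]
  rw [h1, Matrix.ofLp_toEuclideanLin_apply]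
  apply hP.dotProduct_mulVec_pos
  intro h0
  apply hv
  have := congrArg (WithLp.toLp 2) h0
  simpa using this

lemma posdef_quad_lb {m : ℕ} (hm : 0 < m) {P : Matrix (Fin m) (Fin m) ℝ} (hP : P.PosDef) :
    ∃ a > 0, ∀ v : EuclideanSpace ℝ (Fin m),
      a * ‖v‖ ^ 2 ≤ ⟪v, Matrix.toEuclideanLin P v⟫ := by
  set T := Matrix.toEuclideanLin P with hT
  have hTc : Continuous fun v : EuclideanSpace ℝ (Fin m) => T v :=
    T.continuous_of_finiteDimensional
  have hfc : Continuous fun v : EuclideanSpace ℝ (Fin m) => ⟪v, T v⟫ :=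
    continuous_id.inner hTc
  haveI : Nontrivial (EuclideanSpace ℝ (Fin m)) := by
    refine ⟨EuclideanSpace.single ⟨0, hm⟩ 1, 0, ?_⟩
    intro h
    have h1 : ‖EuclideanSpace.single (⟨0, hm⟩ : Fin m) (1:ℝ)‖ = 1 := by
      rw [EuclideanSpace.norm_single]; norm_num
    rw [h] at h1
    simp at h1
  have hsne : (Metric.sphere (0 : EuclideanSpace ℝ (Fin m)) 1).Nonempty :=
    NormedSpace.sphere_nonempty.mpr zero_le_one
  obtain ⟨u, hu, humin⟩ := (isCompact_sphere (0 : EuclideanSpace ℝ (Fin m)) 1).exists_isMinOn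
    hsne hfc.continuousOn
  have hune : u ≠ 0 := by
    intro h
    rw [Metric.mem_sphere, dist_zero_right, h] at hu
    simp at hu
  refine ⟨⟪u, T u⟫, posdef_toEuclideanLin_pos hP hune, fun v => ?_⟩
  rcases eq_or_ne v 0 with rfl | hv
  · simp
  · have hnv : (0:ℝ) < ‖v‖ := norm_pos_iff.mpr hv
    set w : EuclideanSpace ℝ (Fin m) := ‖v‖⁻¹ • v with hw
    have hwmem : w ∈ Metric.sphere (0 : EuclideanSpace ℝ (Fin m)) 1 := by
      simp [hw, norm_smul, abs_of_pos (inv_pos.mpr hnv), inv_mul_cancel₀ hnv.ne']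
    have hmin : ⟪u, T u⟫ ≤ ⟪w, T w⟫ := humin hwmem
    have hvw : v = ‖v‖ • w := by
      rw [hw, smul_smul, mul_inv_cancel₀ hnv.ne', one_smul]
    have hWT : ⟪w, T w⟫ = ‖v‖⁻¹ ^ 2 * ⟪v, T v⟫ := by
      rw [hw, map_smul, real_inner_smul_left, real_inner_smul_right]; ring
    calc ⟪u, T u⟫ * ‖v‖ ^ 2 ≤ ⟪w, T w⟫ * ‖v‖ ^ 2 :=
          mul_le_mul_of_nonneg_right hmin (by positivity)
      _ = ⟪v, T v⟫ := by rw [hWT]; field_simp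

/-- Theorem 4.2 (global convergence of the preconditioned nonlinear CG method): let
`E : ℝᵐ → ℝ` be continuously differentiable (with gradient `g`) and bounded below, with `g`
Lipschitz; let `M` be symmetric positive definite and `0 < c₁ < c₂ < 1/2`. If the iterates
`x_{k+1} = x_k + α_k p_k` follow the preconditioned Fletcher–Reeves CG scheme
`p_0 = −M⁻¹ g(x_0)`, `p_{k+1} = −M⁻¹ g(x_{k+1}) + β_{k+1} p_k` with
`β_{k+1} = ⟪g(x_{k+1}), M⁻¹ g(x_{k+1})⟫ / ⟪g(x_k), M⁻¹ g(x_k)⟫`, the gradients never vanish,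
and every step length `α_k > 0` satisfies the strong Wolfe conditions, then
`lim inf_{k→∞} ‖g(x_k)‖ = 0`. -/
theorem preconditioned_nonlinear_CG_global_convergence
    (m : ℕ) (E : EuclideanSpace ℝ (Fin m) → ℝ)
    (g : EuclideanSpace ℝ (Fin m) → EuclideanSpace ℝ (Fin m))
    (hgrad : ∀ x, HasGradientAt E (g x) x)
    (hbdd : BddBelow (Set.range E))
    (L : NNReal) (hLip : LipschitzWith L g)
    (M : Matrix (Fin m) (Fin m) ℝ) (hMsymm : M.IsSymm) (hMpos : M.PosDef)
    (c₁ c₂ : ℝ) (hc₁ : 0 < c₁) (hc₁₂ : c₁ < c₂) (hc₂ : c₂ < 1 / 2)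
    (x p : ℕ → EuclideanSpace ℝ (Fin m)) (α β : ℕ → ℝ)
    (hx : ∀ k, x (k + 1) = x k + α k • p k)
    (hp0 : p 0 = -(Matrix.toEuclideanLin M⁻¹ (g (x 0))))
    (hβ : ∀ k, β (k + 1)
      = ⟪g (x (k + 1)), Matrix.toEuclideanLin M⁻¹ (g (x (k + 1)))⟫
          / ⟪g (x k), Matrix.toEuclideanLin M⁻¹ (g (x k))⟫)
    (hp : ∀ k, p (k + 1)
      = -(Matrix.toEuclideanLin M⁻¹ (g (x (k + 1)))) + β (k + 1) • p k)
    (hgne : ∀ k, g (x k) ≠ 0)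
    (hα : ∀ k, 0 < α k)
    (hWolfe1 : ∀ k, E (x k + α k • p k) - E (x k) ≤ c₁ * α k * ⟪g (x k), p k⟫)
    (hWolfe2 : ∀ k, |⟪g (x k + α k • p k), p k⟫| ≤ c₂ * |⟪g (x k), p k⟫|) :
    Filter.liminf (fun k => ‖g (x k)‖) Filter.atTop = 0 := by
  classical
  -- the case `m = 0` is vacuous since then `g (x 0) = 0`
  rcases Nat.eq_zero_or_pos m with hm0 | hm
  · exfalso
    apply hgne 0
    ext i
    exact absurd i.2 (by omega)
  -- basic constants
  have hc₂0 : 0 < c₂ := hc₁.trans hc₁₂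
  have h1c₂ : 0 < 1 - c₂ := by linarith
  have h1c₂' : (1 : ℝ) - c₂ ≠ 0 := h1c₂.ne'
  -- matrix facts
  have hMinv : (M⁻¹).PosDef := hMpos.inv
  have hAsymm : ∀ u v : EuclideanSpace ℝ (Fin m),
      ⟪Matrix.toEuclideanLin M⁻¹ u, v⟫ = ⟪u, Matrix.toEuclideanLin M⁻¹ v⟫ :=
    Matrix.isHermitian_iff_isSymmetric.mp hMinv.1
  have hNsymm : ∀ u v : EuclideanSpace ℝ (Fin m),
      ⟪Matrix.toEuclideanLin M u, v⟫ = ⟪u, Matrix.toEuclideanLin M v⟫ :=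
    Matrix.isHermitian_iff_isSymmetric.mp hMpos.1
  have hdet : IsUnit M.det := hMpos.det_pos.ne'.isUnit
  have hNA : ∀ u : EuclideanSpace ℝ (Fin m),
      Matrix.toEuclideanLin M (Matrix.toEuclideanLin M⁻¹ u) = u := by
    intro u
    rw [Matrix.toEuclideanLin_apply, Matrix.toEuclideanLin_apply]
    simp [Matrix.mulVec_mulVec, Matrix.mul_nonsing_inv _ hdet]
  obtain ⟨a, ha, haq⟩ := posdef_quad_lb hm hMinv
  obtain ⟨μ, hμ, hμq⟩ := posdef_quad_lb hm hMpos
  -- abbreviations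
  set q : ℕ → ℝ := fun k => ⟪g (x k), Matrix.toEuclideanLin M⁻¹ (g (x k))⟫ with hqdef
  set P : ℕ → ℝ := fun k => ⟪g (x k), p k⟫ with hPdef
  set nrm : ℕ → ℝ := fun k => ⟪p k, Matrix.toEuclideanLin M (p k)⟫ with hnrmdef
  set s : ℕ → ℝ := fun k => ∑ j ∈ Finset.range (k + 1), (q j)⁻¹ with hsdef
  have hgnorm : ∀ k, 0 < ‖g (x k)‖ := fun k => norm_pos_iff.mpr (hgne k)
  have hq0 : ∀ k, 0 < q k := fun k =>
    lt_of_lt_of_le (by have := hgnorm k; positivity) (haq (g (x k)))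
  have hβq : ∀ k, β (k + 1) = q (k + 1) / q k := hβ
  have hβpos : ∀ k, 0 < β (k + 1) := fun k => by
    rw [hβq k]; exact div_pos (hq0 _) (hq0 _)
  -- descent property (by induction, Al-Baali style)
  have hcs1 : (1 - 2 * c₂) / (1 - c₂) ≤ 1 := by
    rw [div_le_one h1c₂]; linarith
  have hcs : 0 < (1 - 2 * c₂) / (1 - c₂) := by
    apply div_pos (by linarith) h1c₂
  have hinv1 : 1 ≤ 1 / (1 - c₂) := by
    rw [le_div_iff₀ h1c₂]; linarith
  have hW2 : ∀ k, |⟪g (x (k + 1)), p k⟫| ≤ c₂ * |P k| := by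
    intro k
    have h := hWolfe2 k
    rw [← hx k] at h
    exact h
  have hdesc : ∀ k, P k ≤ -((1 - 2 * c₂) / (1 - c₂)) * q k ∧ -(1 / (1 - c₂)) * q k ≤ P k := by
    intro k
    induction k with
    | zero =>
      have hP0 : P 0 = -q 0 := by
        show ⟪g (x 0), p 0⟫ = _
        rw [hp0, inner_neg_right]
      constructor
      · rw [hP0]
        have := hq0 0
        nlinarith
      · rw [hP0]
        have := hq0 0
        nlinarith
    | succ k ih =>
      have hPkneg : P k < 0 := by
        have h1 := ih.1
        have := hq0 k
        nlinarith
      have hPk1 : P (k + 1) = -q (k + 1) + β (k + 1) * ⟪g (x (k + 1)), p k⟫ := by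
        show ⟪g (x (k + 1)), p (k + 1)⟫ = _
        rw [hp k, inner_add_right, inner_neg_right, real_inner_smul_right]
      have hr : |⟪g (x (k + 1)), p k⟫| ≤ c₂ / (1 - c₂) * q k := by
        calc |⟪g (x (k + 1)), p k⟫| ≤ c₂ * |P k| := hW2 k
          _ = c₂ * (-P k) := by rw [abs_of_neg hPkneg]
          _ ≤ c₂ * (1 / (1 - c₂) * q k) := by nlinarith [ih.2]
          _ = c₂ / (1 - c₂) * q k := by ring
      have hbr : |β (k + 1) * ⟪g (x (k + 1)), p k⟫| ≤ c₂ / (1 - c₂) * q (k + 1) := by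
        rw [abs_mul, abs_of_pos (hβpos k), hβq k]
        calc q (k + 1) / q k * |⟪g (x (k + 1)), p k⟫|
            ≤ q (k + 1) / q k * (c₂ / (1 - c₂) * q k) :=
              mul_le_mul_of_nonneg_left hr (le_of_lt (div_pos (hq0 _) (hq0 _)))
          _ = c₂ / (1 - c₂) * q (k + 1) * (q k / q k) := by ring
          _ = c₂ / (1 - c₂) * q (k + 1) := by rw [div_self (hq0 k).ne', mul_one]
      obtain ⟨hbr1, hbr2⟩ := abs_le.mp hbr
      have hkey : -q (k + 1) + c₂ / (1 - c₂) * q (k + 1)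
          = -((1 - 2 * c₂) / (1 - c₂)) * q (k + 1) := by
        field_simp
        ring
      have hkey2 : -q (k + 1) - c₂ / (1 - c₂) * q (k + 1)
          = -(1 / (1 - c₂)) * q (k + 1) := by
        field_simp
        ring
      constructor
      · rw [hPk1]; linarith
      · rw [hPk1]; linarith
  have hPneg : ∀ k, P k < 0 := fun k => by
    have := (hdesc k).1
    have := hq0 k
    nlinarith
  have hpne : ∀ k, p k ≠ 0 := by
    intro k hk
    have : P k = 0 := by
      show ⟪g (x k), p k⟫ = 0
      rw [hk, inner_zero_right]
    linarith [hPneg k]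
  have hpnorm : ∀ k, 0 < ‖p k‖ := fun k => norm_pos_iff.mpr (hpne k)
  have hbrall : ∀ k, |β (k + 1) * ⟪g (x (k + 1)), p k⟫| ≤ c₂ / (1 - c₂) * q (k + 1) := by
    intro k
    have hr : |⟪g (x (k + 1)), p k⟫| ≤ c₂ / (1 - c₂) * q k := by
      calc |⟪g (x (k + 1)), p k⟫| ≤ c₂ * |P k| := hW2 k
        _ = c₂ * (-P k) := by rw [abs_of_neg (hPneg k)]
        _ ≤ c₂ * (1 / (1 - c₂) * q k) := by
            apply mul_le_mul_of_nonneg_left _ hc₂0.le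
            have h := (hdesc k).2
            linarith
        _ = c₂ / (1 - c₂) * q k := by ring
    rw [abs_mul, abs_of_pos (hβpos k), hβq k]
    calc q (k + 1) / q k * |⟪g (x (k + 1)), p k⟫|
        ≤ q (k + 1) / q k * (c₂ / (1 - c₂) * q k) :=
          mul_le_mul_of_nonneg_left hr (le_of_lt (div_pos (hq0 _) (hq0 _)))
      _ = c₂ / (1 - c₂) * q (k + 1) * (q k / q k) := by ring
      _ = c₂ / (1 - c₂) * q (k + 1) := by rw [div_self (hq0 k).ne', mul_one]
  -- norm recursion in the M-weighted norm
  have hnrm0 : nrm 0 = q 0 := by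
    show ⟪p 0, Matrix.toEuclideanLin M (p 0)⟫ = _
    rw [hp0, map_neg, inner_neg_neg, hNA, real_inner_comm]
  have hnrmrec : ∀ k, nrm (k + 1)
      = q (k + 1) - 2 * β (k + 1) * ⟪g (x (k + 1)), p k⟫ + β (k + 1) ^ 2 * nrm k := by
    intro k
    have expand : ∀ (u v : EuclideanSpace ℝ (Fin m)) (b : ℝ),
        ⟪-u + b • v, Matrix.toEuclideanLin M (-u + b • v)⟫
        = ⟪u, Matrix.toEuclideanLin M u⟫ - b * ⟪u, Matrix.toEuclideanLin M v⟫
          - b * ⟪v, Matrix.toEuclideanLin M u⟫ + b ^ 2 * ⟪v, Matrix.toEuclideanLin M v⟫ := by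
      intro u v b
      simp only [map_add, map_neg, map_smul, inner_add_left, inner_add_right, inner_neg_left,
        inner_neg_right, real_inner_smul_left, real_inner_smul_right, neg_neg]
      ring
    have t11 : ⟪Matrix.toEuclideanLin M⁻¹ (g (x (k + 1))),
        Matrix.toEuclideanLin M (Matrix.toEuclideanLin M⁻¹ (g (x (k + 1))))⟫ = q (k + 1) := by
      rw [← hNsymm, hNA]
    have t12 : ⟪Matrix.toEuclideanLin M⁻¹ (g (x (k + 1))),
        Matrix.toEuclideanLin M (p k)⟫ = ⟪g (x (k + 1)), p k⟫ := by
      rw [← hNsymm, hNA]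
    have t21 : ⟪p k, Matrix.toEuclideanLin M (Matrix.toEuclideanLin M⁻¹ (g (x (k + 1))))⟫
        = ⟪g (x (k + 1)), p k⟫ := by
      rw [hNA, real_inner_comm]
    show ⟪p (k + 1), Matrix.toEuclideanLin M (p (k + 1))⟫ = _
    rw [hp k, expand, t11, t12, t21, hnrmdef]
    ring
  have hC1 : 1 ≤ (1 + c₂) / (1 - c₂) := by
    rw [le_div_iff₀ h1c₂]; linarith
  have hCpos : 0 < (1 + c₂) / (1 - c₂) := by positivity
  have hspos : ∀ k, 0 < s k := by
    intro k
    apply Finset.sum_pos (fun i _ => inv_pos.mpr (hq0 i))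
    exact ⟨0, Finset.mem_range.mpr (Nat.succ_pos k)⟩
  have hnbound : ∀ k, nrm k ≤ (1 + c₂) / (1 - c₂) * q k ^ 2 * s k := by
    intro k
    induction k with
    | zero =>
      have hs0 : s 0 = (q 0)⁻¹ := by
        show ∑ j ∈ Finset.range 1, (q j)⁻¹ = _
        rw [Finset.sum_range_one]
      rw [hnrm0, hs0]
      have e0 : (1 + c₂) / (1 - c₂) * q 0 ^ 2 * (q 0)⁻¹
          = (1 + c₂) / (1 - c₂) * q 0 * (q 0 * (q 0)⁻¹) := by ring
      rw [e0, mul_inv_cancel₀ (hq0 0).ne', mul_one]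
      nlinarith [hq0 0]
    | succ k ih =>
      have h2 : -(2 * β (k + 1) * ⟪g (x (k + 1)), p k⟫) ≤ 2 * (c₂ / (1 - c₂)) * q (k + 1) := by
        have := (abs_le.mp (hbrall k)).1
        linarith
      have hstep : nrm (k + 1) ≤ (1 + 2 * (c₂ / (1 - c₂))) * q (k + 1)
          + β (k + 1) ^ 2 * nrm k := by
        rw [hnrmrec k]
        linarith
      have hssucc : s (k + 1) = s k + (q (k + 1))⁻¹ := by
        show ∑ j ∈ Finset.range (k + 2), (q j)⁻¹ = _
        rw [Finset.sum_range_succ]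
      have e1 : (q (k + 1) / q k) ^ 2 * ((1 + c₂) / (1 - c₂) * q k ^ 2 * s k)
          = (1 + c₂) / (1 - c₂) * q (k + 1) ^ 2 * s k := by
        have e1' : (q (k + 1)) ^ 2 / (q k) ^ 2 * ((1 + c₂) / (1 - c₂) * q k ^ 2 * s k)
            = (1 + c₂) / (1 - c₂) * q (k + 1) ^ 2 * s k * (q k ^ 2 / q k ^ 2) := by ring
        rw [div_pow, e1', div_self (pow_ne_zero 2 (hq0 k).ne'), mul_one]
      have e2 : (1 + c₂) / (1 - c₂) * q (k + 1) ^ 2 * (q (k + 1))⁻¹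
          = (1 + c₂) / (1 - c₂) * q (k + 1) := by
        have e2' : (1 + c₂) / (1 - c₂) * q (k + 1) ^ 2 * (q (k + 1))⁻¹
            = (1 + c₂) / (1 - c₂) * q (k + 1) * (q (k + 1) * (q (k + 1))⁻¹) := by ring
        rw [e2', mul_inv_cancel₀ (hq0 (k + 1)).ne', mul_one]
      have e3 : (1:ℝ) + 2 * (c₂ / (1 - c₂)) = (1 + c₂) / (1 - c₂) := by
        field_simp
        ring
      calc nrm (k + 1) ≤ (1 + 2 * (c₂ / (1 - c₂))) * q (k + 1) + β (k + 1) ^ 2 * nrm k := hstep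
        _ ≤ (1 + 2 * (c₂ / (1 - c₂))) * q (k + 1)
            + β (k + 1) ^ 2 * ((1 + c₂) / (1 - c₂) * q k ^ 2 * s k) :=
          add_le_add_right (mul_le_mul_of_nonneg_left ih (sq_nonneg _)) _
        _ = (1 + c₂) / (1 - c₂) * q (k + 1) ^ 2 * s (k + 1) := by
          rw [hβq k, e1, e3, hssucc, mul_add, e2]
          ring
    -- Zoutendijk condition
  have hL' : (0:ℝ) < (L : ℝ) + 1 := by positivity
  have hLipL' : ∀ y z, ‖g y - g z‖ ≤ ((L:ℝ) + 1) * ‖y - z‖ := by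
    intro y z
    have h := hLip.dist_le_mul y z
    rw [dist_eq_norm, dist_eq_norm] at h
    have h2 : (L:ℝ) * ‖y - z‖ ≤ ((L:ℝ) + 1) * ‖y - z‖ := by
      apply mul_le_mul_of_nonneg_right _ (norm_nonneg _)
      linarith
    linarith
  have hxdiff : ∀ k, x (k + 1) - x k = α k • p k := by
    intro k
    rw [hx k, add_sub_cancel_left]
  have halpha : ∀ k, (1 - c₂) * (-P k) ≤ ((L:ℝ) + 1) * α k * ‖p k‖ ^ 2 := by
    intro k
    have h1 : c₂ * P k ≤ ⟪g (x (k + 1)), p k⟫ := by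
      have h := hW2 k
      have habs : c₂ * |P k| = -(c₂ * P k) := by rw [abs_of_neg (hPneg k)]; ring
      have h2 := (abs_le.mp h).1
      rw [habs, neg_neg] at h2
      exact h2
    have h2 : ⟪g (x (k + 1)) - g (x k), p k⟫ ≤ ((L:ℝ) + 1) * α k * ‖p k‖ ^ 2 := by
      calc ⟪g (x (k + 1)) - g (x k), p k⟫ ≤ ‖g (x (k + 1)) - g (x k)‖ * ‖p k‖ :=
            real_inner_le_norm _ _
        _ ≤ (((L:ℝ) + 1) * ‖x (k + 1) - x k‖) * ‖p k‖ :=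
            mul_le_mul_of_nonneg_right (hLipL' _ _) (norm_nonneg _)
        _ = ((L:ℝ) + 1) * α k * ‖p k‖ ^ 2 := by
            rw [hxdiff k, norm_smul, Real.norm_eq_abs, abs_of_pos (hα k)]
            ring
    have h3 : ⟪g (x (k + 1)) - g (x k), p k⟫ = ⟪g (x (k + 1)), p k⟫ - P k := by
      rw [inner_sub_left]
    nlinarith [h1, h2, h3]
  have hαk : ∀ k, c₁ * (1 - c₂) * P k ^ 2 / (((L:ℝ) + 1) * ‖p k‖ ^ 2)
      ≤ E (x k) - E (x (k + 1)) := by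
    intro k
    have hD : 0 < ((L:ℝ) + 1) * ‖p k‖ ^ 2 := by
      have := hpnorm k
      positivity
    have hW1 : E (x (k + 1)) - E (x k) ≤ c₁ * α k * P k := by
      have h := hWolfe1 k
      rw [← hx k] at h
      exact h
    have hstep : (1 - c₂) * (-P k) / (((L:ℝ) + 1) * ‖p k‖ ^ 2) ≤ α k := by
      rw [div_le_iff₀ hD]
      calc (1 - c₂) * (-P k) ≤ ((L:ℝ) + 1) * α k * ‖p k‖ ^ 2 := halpha k
        _ = α k * (((L:ℝ) + 1) * ‖p k‖ ^ 2) := by ring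
    have hkey : c₁ * (1 - c₂) * P k ^ 2 / (((L:ℝ) + 1) * ‖p k‖ ^ 2)
        = (c₁ * (-P k)) * ((1 - c₂) * (-P k) / (((L:ℝ) + 1) * ‖p k‖ ^ 2)) := by
      field_simp
    rw [hkey]
    have h4 : (c₁ * (-P k)) * ((1 - c₂) * (-P k) / (((L:ℝ) + 1) * ‖p k‖ ^ 2))
        ≤ (c₁ * (-P k)) * α k := by
      apply mul_le_mul_of_nonneg_left hstep
      nlinarith [hPneg k]
    nlinarith [hW1, h4]
  obtain ⟨B, hB⟩ := hbdd
  have hsum : Summable (fun k => c₁ * (1 - c₂) * P k ^ 2 / (((L:ℝ) + 1) * ‖p k‖ ^ 2)) := by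
    apply summable_of_sum_range_le (c := E (x 0) - B)
    · intro k
      apply div_nonneg
      · exact mul_nonneg (mul_nonneg hc₁.le h1c₂.le) (sq_nonneg _)
      · positivity
    · intro n
      calc ∑ i ∈ Finset.range n, c₁ * (1 - c₂) * P i ^ 2 / (((L:ℝ) + 1) * ‖p i‖ ^ 2)
          ≤ ∑ i ∈ Finset.range n, (E (x i) - E (x (i + 1))) :=
            Finset.sum_le_sum (fun i _ => hαk i)
        _ = E (x 0) - E (x n) := Finset.sum_range_sub' (fun i => E (x i)) n
        _ ≤ E (x 0) - B := by
            have : B ≤ E (x n) := hB (Set.mem_range_self (x n))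
            linarith
  have hsum2 : Summable (fun k => P k ^ 2 / ‖p k‖ ^ 2) := by
    have h := hsum.mul_left (((L:ℝ) + 1) / (c₁ * (1 - c₂)))
    apply h.congr
    intro k
    have hnp := (hpnorm k).ne'
    field_simp
  -- the gradients are frequently small
  have hfreq : ∀ b : ℝ, 0 < b → ¬ (∀ᶠ k in Filter.atTop, b ≤ ‖g (x k)‖) := by
    intro b hb hev
    obtain ⟨N, hN⟩ := Filter.eventually_atTop.mp hev
    have hδpos : 0 < a * b ^ 2 := by positivity
    have hδ : ∀ k, N ≤ k → a * b ^ 2 ≤ q k := by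
      intro k hk
      calc a * b ^ 2 ≤ a * ‖g (x k)‖ ^ 2 := by
            apply mul_le_mul_of_nonneg_left _ ha.le
            exact pow_le_pow_left₀ hb.le (hN k hk) 2
        _ ≤ q k := haq _
    set T : ℝ := (a * b ^ 2)⁻¹ + ∑ j ∈ Finset.range N, (q j)⁻¹ with hTdef
    have hT : 0 < T := by
      apply add_pos_of_pos_of_nonneg (inv_pos.mpr hδpos)
      exact Finset.sum_nonneg (fun i _ => (inv_pos.mpr (hq0 i)).le)
    have hqT : ∀ j, (q j)⁻¹ ≤ T := by
      intro j
      rcases lt_or_ge j N with hj | hj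
      · have h1 : (q j)⁻¹ ≤ ∑ i ∈ Finset.range N, (q i)⁻¹ :=
          Finset.single_le_sum (fun i _ => (inv_pos.mpr (hq0 i)).le) (Finset.mem_range.mpr hj)
        have h2 : 0 < (a * b ^ 2)⁻¹ := inv_pos.mpr hδpos
        rw [hTdef]
        linarith
      · have h1 : (q j)⁻¹ ≤ (a * b ^ 2)⁻¹ := inv_anti₀ hδpos (hδ j hj)
        have h2 : 0 ≤ ∑ i ∈ Finset.range N, (q i)⁻¹ :=
          Finset.sum_nonneg (fun i _ => (inv_pos.mpr (hq0 i)).le)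
        rw [hTdef]
        linarith
    have hsk : ∀ k, s k ≤ ((k:ℝ) + 1) * T := by
      intro k
      calc s k ≤ ∑ j ∈ Finset.range (k + 1), T := Finset.sum_le_sum (fun j _ => hqT j)
        _ = ((k:ℝ) + 1) * T := by
            rw [Finset.sum_const, Finset.card_range, nsmul_eq_mul]
            push_cast
            ring
    set K : ℝ := μ * ((1 - 2 * c₂) / (1 - c₂)) ^ 2 / ((1 + c₂) / (1 - c₂)) / T with hKdef
    have hK : 0 < K := div_pos (div_pos (mul_pos hμ (pow_pos hcs 2)) hCpos) hT
    have hKey : ∀ k : ℕ, K * (1 / ((k:ℝ) + 1)) ≤ P k ^ 2 / ‖p k‖ ^ 2 := by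
      intro k
      have hμp : μ * ‖p k‖ ^ 2 ≤ nrm k := hμq (p k)
      have hnrmpos : 0 < nrm k := by
        have h := hpnorm k
        calc (0:ℝ) < μ * ‖p k‖ ^ 2 := by positivity
          _ ≤ nrm k := hμp
      have hP2 : ((1 - 2 * c₂) / (1 - c₂)) ^ 2 * q k ^ 2 ≤ P k ^ 2 := by
        have h1 : (1 - 2 * c₂) / (1 - c₂) * q k ≤ -P k := by
          have := (hdesc k).1
          linarith
        have h2 : 0 ≤ (1 - 2 * c₂) / (1 - c₂) * q k := le_of_lt (mul_pos hcs (hq0 k))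
        nlinarith
      have step1 : μ * P k ^ 2 / nrm k ≤ P k ^ 2 / ‖p k‖ ^ 2 := by
        rw [div_le_div_iff₀ hnrmpos (by have := hpnorm k; positivity)]
        nlinarith [hμp, sq_nonneg (P k)]
      have step2 : μ * (((1 - 2 * c₂) / (1 - c₂)) ^ 2 * q k ^ 2) / nrm k
          ≤ μ * P k ^ 2 / nrm k :=
        (div_le_div_iff_of_pos_right hnrmpos).mpr (mul_le_mul_of_nonneg_left hP2 hμ.le)
      have hnum : 0 < μ * (((1 - 2 * c₂) / (1 - c₂)) ^ 2 * q k ^ 2) := by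
        have := hq0 k
        have := hcs
        positivity
      have step3 : μ * (((1 - 2 * c₂) / (1 - c₂)) ^ 2 * q k ^ 2)
            / ((1 + c₂) / (1 - c₂) * q k ^ 2 * s k)
          ≤ μ * (((1 - 2 * c₂) / (1 - c₂)) ^ 2 * q k ^ 2) / nrm k :=
        div_le_div_of_nonneg_left hnum.le hnrmpos (hnbound k)
      have hCq : 0 < (1 + c₂) / (1 - c₂) * q k ^ 2 * s k := by
        have := hq0 k
        have := hspos k
        exact mul_pos (mul_pos hCpos (pow_pos (hq0 k) 2)) (hspos k)
      have step4 : (μ * ((1 - 2 * c₂) / (1 - c₂)) ^ 2 / ((1 + c₂) / (1 - c₂)))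
            / (((k:ℝ) + 1) * T)
          ≤ μ * (((1 - 2 * c₂) / (1 - c₂)) ^ 2 * q k ^ 2)
            / ((1 + c₂) / (1 - c₂) * q k ^ 2 * s k) := by
        have e4 : μ * (((1 - 2 * c₂) / (1 - c₂)) ^ 2 * q k ^ 2)
              / ((1 + c₂) / (1 - c₂) * q k ^ 2 * s k)
            = (μ * ((1 - 2 * c₂) / (1 - c₂)) ^ 2 / ((1 + c₂) / (1 - c₂))) / s k := by
          rw [div_div]
          rw [div_eq_div_iff hCq.ne'
            (mul_pos hCpos (hspos k)).ne']
          field_simp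
        rw [e4]
        apply div_le_div_of_nonneg_left _ (hspos k) (hsk k)
        positivity
      have e5 : (μ * ((1 - 2 * c₂) / (1 - c₂)) ^ 2 / ((1 + c₂) / (1 - c₂)))
            / (((k:ℝ) + 1) * T)
          = K * (1 / ((k:ℝ) + 1)) := by
        have hk1 : ((k:ℝ) + 1) ≠ 0 := by positivity
        rw [hKdef]
        field_simp
      calc K * (1 / ((k:ℝ) + 1))
          = (μ * ((1 - 2 * c₂) / (1 - c₂)) ^ 2 / ((1 + c₂) / (1 - c₂)))
            / (((k:ℝ) + 1) * T) := e5.symm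
        _ ≤ _ := le_trans step4 (le_trans step3 (le_trans step2 step1))
    have hsum3 : Summable (fun k : ℕ => K * (1 / ((k:ℝ) + 1))) := by
      apply Summable.of_nonneg_of_le _ hKey hsum2
      intro k
      exact mul_nonneg hK.le (by positivity)
    have hsum4 : Summable (fun k : ℕ => 1 / ((k:ℝ) + 1)) :=
      (summable_mul_left_iff hK.ne').mp hsum3
    have hsum5 : Summable (fun n : ℕ => 1 / (n:ℝ)) := by
      rw [← summable_nat_add_iff 1]
      apply hsum4.congr
      intro n
      push_cast
      ring
    exact Real.not_summable_one_div_natCast hsum5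
  -- conclude
  rw [Filter.liminf_eq]
  have h0S : (0:ℝ) ∈ {a | ∀ᶠ n in Filter.atTop, a ≤ ‖g (x n)‖} :=
    Filter.Eventually.of_forall (fun n => norm_nonneg _)
  have hub : ∀ a' ∈ {a | ∀ᶠ n in Filter.atTop, a ≤ ‖g (x n)‖}, a' ≤ 0 := by
    intro a' ha'
    by_contra hcon
    push_neg at hcon
    exact hfreq a' hcon ha'
  exact le_antisymm (csSup_le ⟨0, h0S⟩ hub) (le_csSup ⟨0, hub⟩ h0S)
end
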